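/- Let M ≻ 0, D, L be real symmetric n×n matrices with L·1 = 0, β > 0, and suppose D − 2βM ⪰ 0 and L − βD + β²M + v·11^T ⪰ 0 for some v > 0. Then there is no real quadratic eigenvalue λ of (λ²M + λD + L)ν = 0 (ν ≠ 0) with −β < λ < 0, given additionally that 1^T D 1 > 0. -/

import Mathlib

open Matrix Complex

theorem stmt_13 {n : ℕ} (M D L : Matrix (Fin n) (Fin n) ℝ)
    (hM : M.PosDef) (hD : D.IsSymm) (hL : L.IsSymm)
    (β v : ℝ) (hβ : 0 < β) (hv : 0 < v)
    (hDM : (D - (2 * β) • M).PosSemidef)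
    (hL1 : L.mulVec (fun _ => (1:ℝ)) = 0)
    (hLv : (L - β • D + (β ^ 2) • M + v • (Matrix.of fun _ _ => (1:ℝ))).PosSemidef)
    (hD1 : 0 < (fun _ => (1:ℝ)) ⬝ᵥ D.mulVec (fun _ => (1:ℝ))) :
    ¬ ∃ (lam : ℝ) (ν : Fin n → ℂ), -β < lam ∧ lam < 0 ∧ ν ≠ 0 ∧
      (((lam : ℂ)) ^ 2 • M.map (Complex.ofReal) + (lam : ℂ) • D.map (Complex.ofReal)
        + L.map (Complex.ofReal)).mulVec ν = 0 := by
  rintro ⟨lam, ν, hlb, hub, hν, heq⟩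
  -- the real matrix A
  set A : Matrix (Fin n) (Fin n) ℝ := lam ^ 2 • M + lam • D + L with hAdef
  -- complex kernel equation, entrywise
  have hA' : ∀ i, ∑ j, (A i j : ℂ) * ν j = 0 := by
    intro i
    have h := congrFun heq i
    simp only [Matrix.mulVec, dotProduct, Matrix.add_apply, Matrix.smul_apply,
      Matrix.map_apply, smul_eq_mul, Pi.zero_apply] at h
    rw [← h]
    refine Finset.sum_congr rfl fun j _ => ?_
    simp only [hAdef, Matrix.add_apply, Matrix.smul_apply, smul_eq_mul]
    push_cast
    ring
  -- real and imaginary parts are real kernel vectors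
  have hre : A.mulVec (fun j => (ν j).re) = 0 := by
    funext i
    have h := congrArg Complex.re (hA' i)
    simpa [Matrix.mulVec, dotProduct, Complex.mul_re] using h
  have him : A.mulVec (fun j => (ν j).im) = 0 := by
    funext i
    have h := congrArg Complex.im (hA' i)
    simpa [Matrix.mulVec, dotProduct, Complex.mul_im] using h
  -- pick a nonzero real kernel vector μ
  obtain ⟨μ, hμ0, hAμ⟩ : ∃ μ : Fin n → ℝ, μ ≠ 0 ∧ A.mulVec μ = 0 := by
    by_cases hx : (fun j => (ν j).re) = (0 : Fin n → ℝ)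
    · refine ⟨_, ?_, him⟩
      intro hy
      apply hν
      funext j
      have h1 := congrFun hx j
      have h2 := congrFun hy j
      simp at h1 h2
      exact Complex.ext h1 h2
    · exact ⟨_, hx, hre⟩
  -- basic setup
  have hn : 0 < n := by
    rcases Function.ne_iff.1 hμ0 with ⟨i, _⟩
    exact i.pos
  set o : Fin n → ℝ := fun _ => (1:ℝ) with ho
  have hone : o ≠ 0 := by
    intro h
    have := congrFun h ⟨0, hn⟩
    simp [ho] at this
  set lh : ℝ := lam + β with hlh
  have hlh0 : 0 < lh := by simp [hlh]; linarith
  set J : Matrix (Fin n) (Fin n) ℝ := Matrix.of fun _ _ => (1:ℝ) with hJdef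
  have hJquad : ∀ x : Fin n → ℝ, x ⬝ᵥ J.mulVec x = (∑ i, x i) ^ 2 := by
    intro x
    simp only [hJdef, Matrix.mulVec, dotProduct, Matrix.of_apply, one_mul]
    rw [← Finset.sum_mul]
    ring
  -- decomposition of A
  have hAdecomp : A = lh ^ 2 • M + lh • (D - (2 * β) • M)
      + ((L - β • D + (β ^ 2) • M + v • J) - v • J) := by
    ext i j
    simp only [hAdef, hlh, Matrix.add_apply, Matrix.sub_apply, Matrix.smul_apply, smul_eq_mul]
    ring
  -- quadratic form expansion
  have expand : ∀ x : Fin n → ℝ, x ⬝ᵥ A.mulVec x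
      = lh ^ 2 * (x ⬝ᵥ M.mulVec x) + lh * (x ⬝ᵥ (D - (2 * β) • M).mulVec x)
        + (x ⬝ᵥ (L - β • D + (β ^ 2) • M + v • J).mulVec x) - v * (∑ i, x i) ^ 2 := by
    intro x
    conv_lhs => rw [hAdecomp]
    rw [← hJquad x]
    simp only [Matrix.add_mulVec, Matrix.sub_mulVec, Matrix.smul_mulVec,
      dotProduct_add, dotProduct_sub, dotProduct_smul, smul_eq_mul]
    ring
  -- positivity on the sum-zero subspace
  have key : ∀ x : Fin n → ℝ, x ≠ 0 → (∑ i, x i) = 0 → 0 < x ⬝ᵥ A.mulVec x := by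
    intro x hx hs
    rw [expand x, hs]
    have h1 : 0 < x ⬝ᵥ M.mulVec x := by
      have := hM.dotProduct_mulVec_pos hx
      simpa using this
    have h2 : 0 ≤ x ⬝ᵥ (D - (2 * β) • M).mulVec x := by
      have := hDM.dotProduct_mulVec_nonneg x
      simpa using this
    have h3 : 0 ≤ x ⬝ᵥ (L - β • D + (β ^ 2) • M + v • J).mulVec x := by
      have := hLv.dotProduct_mulVec_nonneg x
      simpa [hJdef] using this
    nlinarith [mul_pos (mul_pos hlh0 hlh0) h1, mul_nonneg hlh0.le h2]
  -- 1ᵀ A 1 < 0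
  have hoM : 0 < o ⬝ᵥ M.mulVec o := by
    have := hM.dotProduct_mulVec_pos hone
    simpa using this
  have hoDM : 0 ≤ o ⬝ᵥ D.mulVec o - 2 * β * (o ⬝ᵥ M.mulVec o) := by
    have := hDM.dotProduct_mulVec_nonneg o
    simpa [Matrix.sub_mulVec, Matrix.smul_mulVec, dotProduct_sub,
      dotProduct_smul, smul_eq_mul] using this
  have hoA : o ⬝ᵥ A.mulVec o = lam ^ 2 * (o ⬝ᵥ M.mulVec o) + lam * (o ⬝ᵥ D.mulVec o) := by
    simp only [hAdef, Matrix.add_mulVec, Matrix.smul_mulVec, dotProduct_add,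
      dotProduct_smul, smul_eq_mul, hL1, dotProduct_zero]
    ring
  have hoAneg : o ⬝ᵥ A.mulVec o < 0 := by
    rw [hoA]
    have hmono : lam * (o ⬝ᵥ D.mulVec o) ≤ lam * (2 * β * (o ⬝ᵥ M.mulVec o)) :=
      mul_le_mul_of_nonpos_left (by linarith) hub.le
    have h5 : lam * (lam + 2 * β) < 0 :=
      mul_neg_of_neg_of_pos hub (by linarith)
    nlinarith [mul_pos hoM (neg_pos.2 h5)]
  -- A is symmetric
  have hAsymm : Aᵀ = A := by
    have hMs : Mᵀ = M := by
      ext i j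
      have := congrFun (congrFun hM.1 i) j
      simpa [Matrix.conjTranspose_apply] using this
    simp only [hAdef, Matrix.transpose_add, Matrix.transpose_smul, hMs, hD.eq, hL.eq]
  -- cross terms with μ vanish
  have hcross : ∀ y : Fin n → ℝ, μ ⬝ᵥ A.mulVec y = 0 := by
    intro y
    rw [Matrix.dotProduct_mulVec, ← Matrix.mulVec_transpose, hAsymm, hAμ]
    exact zero_dotProduct y
  have hμq : μ ⬝ᵥ A.mulVec μ = 0 := by rw [hAμ]; exact dotProduct_zero μ
  -- case analysis on s = ∑ μ
  by_cases hs : (∑ i, μ i) = 0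
  · exact absurd hμq (ne_of_gt (key μ hμ0 hs))
  · set t : ℝ := -(n : ℝ) / (∑ i, μ i) with ht
    set x : Fin n → ℝ := o + t • μ with hx
    have hso : (∑ i, o i) = (n : ℝ) := by simp [ho]
    have hsx : (∑ i, x i) = 0 := by
      simp only [hx, Pi.add_apply, Pi.smul_apply, smul_eq_mul, Finset.sum_add_distrib,
        ← Finset.mul_sum, hso, ht]
      field_simp
      ring
    by_cases hx0 : x = (0 : Fin n → ℝ)
    · -- then o is a multiple of μ, hence A.mulVec o = 0, contradicting hoAneg
      have hoeq : o = (-t) • μ := by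
        funext i
        have := congrFun hx0 i
        simp only [hx, Pi.add_apply, Pi.smul_apply, smul_eq_mul, Pi.zero_apply] at this
        simp only [Pi.smul_apply, smul_eq_mul]
        linarith
      have : A.mulVec o = 0 := by
        rw [hoeq, Matrix.mulVec_smul, hAμ, smul_zero]
      rw [this, dotProduct_zero] at hoAneg
      exact lt_irrefl 0 hoAneg
    · have hpos := key x hx0 hsx
      have hqx : x ⬝ᵥ A.mulVec x = o ⬝ᵥ A.mulVec o := by
        have hmv : A.mulVec x = A.mulVec o := by
          rw [hx, Matrix.mulVec_add, Matrix.mulVec_smul, hAμ, smul_zero, add_zero]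
        rw [hmv, hx, add_dotProduct, smul_dotProduct, smul_eq_mul,
          hcross o, mul_zero, add_zero]
      rw [hqx] at hpos
      exact lt_irrefl 0 (lt_trans hpos hoAneg)
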